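/- Assume hypotheses (EC) and (UC). Let r ∈ (0,r_T). Then the map τ ↦ M(τ,r) from [0,T) to [M(0,r),∞) is strictly monotonically increasing and continuous, with lim_{τ→T⁻} M(τ,r) = ∞. Moreover M = M(τ(M,r),r) for every M ≥ M(0,r), and τ = τ(M(τ,r),r) for every τ ∈ [0,T); consequently the map M ↦ τ(M,r) is the inverse of the map τ ↦ M(τ,r). -/

import Mathlib

open MeasureTheory Set Filter Topology

noncomputable section

variable {H : Type*} [NormedAddCommGroup H] [InnerProductSpace ℂ H] [CompleteSpace H]
  [SecondCountableTopology H]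

/-- `U` is a strongly continuous one-parameter group of unitary operators on `H`,
abstracting the Schrödinger group `e^{-iΔt}`. -/
def IsUnitaryGroup (U : ℝ → H →L[ℂ] H) : Prop :=
  U 0 = ContinuousLinearMap.id ℂ H ∧
  (∀ s t : ℝ, U (s + t) = (U s).comp (U t)) ∧
  (∀ (t : ℝ) (x : H), ‖U t x‖ = ‖x‖) ∧
  ∀ x : H, Continuous fun t : ℝ => U t x

/-- `B` is a nonzero orthogonal projection on `H`, abstracting multiplication by `χ_ω`. -/
def IsOrthProj (B : H →L[ℂ] H) : Prop :=
  B ≠ 0 ∧ B.comp B = B ∧ ∀ x y : H, (inner ℂ (B x) y : ℂ) = inner ℂ x (B y)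

/-- Membership in `L∞((a,b);H)`. -/
def MemLinfty (u : ℝ → H) (a b : ℝ) : Prop :=
  AEStronglyMeasurable u (volume : Measure ℝ) ∧
    ∃ c : ℝ, ∀ᵐ t : ℝ ∂volume, t ∈ Ioo a b → ‖u t‖ ≤ c

/-- Membership in `L∞((0,∞);H)`. -/
def MemLinftyInf (u : ℝ → H) : Prop :=
  AEStronglyMeasurable u (volume : Measure ℝ) ∧
    ∃ c : ℝ, ∀ᵐ t : ℝ ∂volume, t ∈ Ioi (0 : ℝ) → ‖u t‖ ≤ c

/-- The `L∞((a,b);H)` norm of `u`. -/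
def supNorm (u : ℝ → H) (a b : ℝ) : ℝ :=
  sInf {c : ℝ | 0 ≤ c ∧ ∀ᵐ t : ℝ ∂volume, t ∈ Ioo a b → ‖u t‖ ≤ c}

/-- `stateT U B T τ u y₀ = y(T; χ_{(τ,T)}u, y₀)`, the mild solution at time `T` of the
controlled Schrödinger equation with initial state `y₀`, the control acting on `(τ,T)`:
`y(T) = U(T)y₀ + ∫_τ^T U(T-s) B u(s) ds`.  The free state at time `t` starting from `y₀`
with control `u` active from time `0` is `stateT U B t 0 u y₀`. -/
def stateT (U : ℝ → H →L[ℂ] H) (B : H →L[ℂ] H) (T τ : ℝ) (u : ℝ → H) (y₀ : H) : H :=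
  U T y₀ + ∫ s in Ioo τ T, U (T - s) (B (u s))

/-- Hypothesis (EC): `L∞`-exact controllability with cost. -/
def EC (U : ℝ → H →L[ℂ] H) (B : H →L[ℂ] H) : Prop :=
  ∀ τ : ℝ, 0 < τ → ∃ C : ℝ, 0 < C ∧ ∀ y₀ z : H, ∃ u : ℝ → H,
    AEStronglyMeasurable u (volume : Measure ℝ) ∧
    (∀ᵐ t : ℝ ∂volume, t ∈ Ioo 0 τ → ‖u t‖ ≤ C * ‖z - U τ y₀‖) ∧
    stateT U B τ 0 u y₀ = z

/-- Hypothesis (UC): unique continuation. -/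
def UC (U : ℝ → H →L[ℂ] H) (B : H →L[ℂ] H) : Prop :=
  ∀ η : H, η ≠ 0 → volume {t : ℝ | B (U t η) = 0} = 0

/-- The admissible set `U_M` of the minimal time problem `(TOCP)_M`. -/
def UMset (U : ℝ → H →L[ℂ] H) (B : H →L[ℂ] H) (y₀ : H) (M : ℝ) : Set (ℝ → H) :=
  {u | MemLinftyInf u ∧ (∀ᵐ t : ℝ ∂volume, t ∈ Ioi (0 : ℝ) → ‖u t‖ ≤ M) ∧
    ∃ s : ℝ, 0 < s ∧ stateT U B s 0 u y₀ = 0}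

/-- The minimal time `T_M` of `(TOCP)_M`. -/
def Tmin (U : ℝ → H →L[ℂ] H) (B : H →L[ℂ] H) (y₀ : H) (M : ℝ) : ℝ :=
  sInf {s : ℝ | 0 < s ∧ ∃ u ∈ UMset U B y₀ M, stateT U B s 0 u y₀ = 0}

/-- The admissible set `V_T` of the minimal norm problem `(NOCP)_T`. -/
def VTset (U : ℝ → H →L[ℂ] H) (B : H →L[ℂ] H) (y₀ : H) (T : ℝ) : Set (ℝ → H) :=
  {v | MemLinfty v 0 T ∧ stateT U B T 0 v y₀ = 0}

/-- The minimal norm `M_T` of `(NOCP)_T`. -/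
def Mmin (U : ℝ → H →L[ℂ] H) (B : H →L[ℂ] H) (y₀ : H) (T : ℝ) : ℝ :=
  sInf ((fun v : ℝ → H => supNorm v 0 T) '' VTset U B y₀ T)

/-- Hypothesis (BB): bang-bang property of the minimal time problems. -/
def BB (U : ℝ → H →L[ℂ] H) (B : H →L[ℂ] H) : Prop :=
  ∀ y₀ : H, y₀ ≠ 0 → ∀ M : ℝ, 0 < M → ∀ u ∈ UMset U B y₀ M,
    stateT U B (Tmin U B y₀ M) 0 u y₀ = 0 →
    ∀ᵐ t : ℝ ∂volume, t ∈ Ioo 0 (Tmin U B y₀ M) → ‖u t‖ = M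

/-- Hypothesis (ET): existence of optimal controls for the minimal time problems. -/
def ET (U : ℝ → H →L[ℂ] H) (B : H →L[ℂ] H) : Prop :=
  ∀ y₀ : H, y₀ ≠ 0 → ∀ M : ℝ, 0 < M →
    ∃ u ∈ UMset U B y₀ M, stateT U B (Tmin U B y₀ M) 0 u y₀ = 0

/-- The admissible set `U_{M,τ}`. -/
def UadmSet (M τ T : ℝ) : Set (ℝ → H) :=
  {u | MemLinfty u 0 T ∧ ∀ᵐ t : ℝ ∂volume, t ∈ Ioo τ T → ‖u t‖ ≤ M}

/-- The optimal distance `r(M,τ)` of the optimal target problem `(OP)^{M,τ}`. -/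
def rOP (U : ℝ → H →L[ℂ] H) (B : H →L[ℂ] H) (y₀ z_d : H) (T M τ : ℝ) : ℝ :=
  sInf ((fun u : ℝ → H => ‖stateT U B T τ u y₀ - z_d‖) '' UadmSet M τ T)

/-- `u` is an optimal control to `(OP)^{M,τ}`. -/
def IsOptOP (U : ℝ → H →L[ℂ] H) (B : H →L[ℂ] H) (y₀ z_d : H) (T M τ : ℝ) (u : ℝ → H) :
    Prop :=
  u ∈ UadmSet M τ T ∧ ‖stateT U B T τ u y₀ - z_d‖ = rOP U B y₀ z_d T M τ

/-- `M^τ`, the minimal norm for exact steering to the target `z_d`. -/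
def Mtau (U : ℝ → H →L[ℂ] H) (B : H →L[ℂ] H) (y₀ z_d : H) (T τ : ℝ) : ℝ :=
  sInf ((fun u : ℝ → H => supNorm u τ T) ''
    {u : ℝ → H | MemLinfty u 0 T ∧ stateT U B T τ u y₀ = z_d})

/-- The admissible set `W_{τ,r}` of the optimal norm problem `(NP)^{τ,r}`. -/
def WadmSet (U : ℝ → H →L[ℂ] H) (B : H →L[ℂ] H) (y₀ z_d : H) (T τ r : ℝ) :
    Set (ℝ → H) :=
  {u | MemLinfty u 0 T ∧ ‖stateT U B T τ u y₀ - z_d‖ ≤ r}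

/-- The optimal norm `M(τ,r)` of `(NP)^{τ,r}`. -/
def MNP (U : ℝ → H →L[ℂ] H) (B : H →L[ℂ] H) (y₀ z_d : H) (T τ r : ℝ) : ℝ :=
  sInf ((fun u : ℝ → H => supNorm u τ T) '' WadmSet U B y₀ z_d T τ r)

/-- `u` is an optimal control to `(NP)^{τ,r}`. -/
def IsOptNP (U : ℝ → H →L[ℂ] H) (B : H →L[ℂ] H) (y₀ z_d : H) (T τ r : ℝ) (u : ℝ → H) :
    Prop :=
  u ∈ WadmSet U B y₀ z_d T τ r ∧ supNorm u τ T = MNP U B y₀ z_d T τ r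

/-- The admissible set `V_{M,r}` of the second type optimal time problem `(TP)^{M,r}`. -/
def VadmSet (U : ℝ → H →L[ℂ] H) (B : H →L[ℂ] H) (y₀ z_d : H) (T M r : ℝ) :
    Set (ℝ → H) :=
  {u | ∃ τ : ℝ, τ ∈ Ico (0 : ℝ) T ∧ u ∈ UadmSet M τ T ∧
    ‖stateT U B T τ u y₀ - z_d‖ ≤ r}

/-- `τ_{M,r}(u)`. -/
def tauOf (U : ℝ → H →L[ℂ] H) (B : H →L[ℂ] H) (y₀ z_d : H) (T r : ℝ) (u : ℝ → H) : ℝ :=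
  sSup {τ : ℝ | τ ∈ Ico (0 : ℝ) T ∧ ‖stateT U B T τ u y₀ - z_d‖ ≤ r}

/-- The optimal time `τ(M,r)` of `(TP)^{M,r}`. -/
def tauTP (U : ℝ → H →L[ℂ] H) (B : H →L[ℂ] H) (y₀ z_d : H) (T M r : ℝ) : ℝ :=
  sSup (tauOf U B y₀ z_d T r '' VadmSet U B y₀ z_d T M r)

/-- `u` is an optimal control to `(TP)^{M,r}`. -/
def IsOptTP (U : ℝ → H →L[ℂ] H) (B : H →L[ℂ] H) (y₀ z_d : H) (T M r : ℝ) (u : ℝ → H) :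
    Prop :=
  u ∈ VadmSet U B y₀ z_d T M r ∧
    ‖stateT U B T (tauTP U B y₀ z_d T M r) u y₀ - z_d‖ ≤ r

/-- The adjoint state `φ*(t) = U(t-T)(z_d - y(T; χ_{(τ,T)}u, y₀))`. -/
def adjState (U : ℝ → H →L[ℂ] H) (B : H →L[ℂ] H) (y₀ z_d : H) (T τ : ℝ) (u : ℝ → H)
    (t : ℝ) : H :=
  U (t - T) (z_d - stateT U B T τ u y₀)

section AuxDev
set_option linter.unusedSectionVars false

variable {U : ℝ → H →L[ℂ] H} {B : H →L[ℂ] H}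

lemma orthProj_norm_le (hB : IsOrthProj B) (x : H) : ‖B x‖ ≤ ‖x‖ := by
  rcases eq_or_ne (B x) 0 with h | h
  · simp [h]
  · have h2 : B (B x) = B x := by
      have := congrArg (fun L : H →L[ℂ] H => L x) hB.2.1
      simpa using this
    have h1 : (‖B x‖ : ℝ) ^ 2 = RCLike.re (inner ℂ (B x) (B x) : ℂ) := by
      rw [inner_self_eq_norm_sq]
    have h3 : (inner ℂ (B x) (B x) : ℂ) = inner ℂ x (B x) := by
      rw [hB.2.2 x (B x)] at *
      rw [h2]
    have h4 : RCLike.re (inner ℂ x (B x) : ℂ) ≤ ‖x‖ * ‖B x‖ := by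
      refine le_trans (RCLike.re_le_norm _) ?_
      exact norm_inner_le_norm _ _
    have h5 : ‖B x‖ ^ 2 ≤ ‖x‖ * ‖B x‖ := by rw [h1, h3]; exact h4
    have h6 : 0 < ‖B x‖ := norm_pos_iff.2 h
    nlinarith

lemma Ugroup_apply (hU : IsUnitaryGroup U) (s t : ℝ) (x : H) :
    U (s + t) x = U s (U t x) := by
  rw [hU.2.1 s t]; rfl

lemma Ugroup_zero (hU : IsUnitaryGroup U) (x : H) : U 0 x = x := by
  rw [hU.1]; rfl

lemma Ugroup_cancel (hU : IsUnitaryGroup U) (a : ℝ) (x : H) : U a (U (-a) x) = x := by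
  rw [← Ugroup_apply hU a (-a) x]; simp [Ugroup_zero hU]

lemma Ugroup_norm (hU : IsUnitaryGroup U) (t : ℝ) (x : H) : ‖U t x‖ = ‖x‖ :=
  hU.2.2.1 t x

lemma Ugroup_jointCont (hU : IsUnitaryGroup U) :
    Continuous fun p : ℝ × H => U p.1 p.2 := by
  rw [continuous_iff_continuousAt]
  rintro ⟨t₀, x₀⟩
  have e1 : Tendsto (fun p : ℝ × H => ‖p.2 - x₀‖) (𝓝 (t₀, x₀)) (𝓝 0) := by
    have : Tendsto (fun p : ℝ × H => p.2) (𝓝 (t₀, x₀)) (𝓝 x₀) :=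
      continuous_snd.tendsto _
    simpa using tendsto_iff_norm_sub_tendsto_zero.1 this
  have e2 : Tendsto (fun p : ℝ × H => ‖U p.1 x₀ - U t₀ x₀‖) (𝓝 (t₀, x₀)) (𝓝 0) := by
    have h2 : Tendsto (fun p : ℝ × H => U p.1 x₀) (𝓝 (t₀, x₀)) (𝓝 (U t₀ x₀)) :=
      ((hU.2.2.2 x₀).tendsto t₀).comp (continuous_fst.tendsto _)
    simpa using tendsto_iff_norm_sub_tendsto_zero.1 h2
  have h1 : Tendsto (fun p : ℝ × H => ‖p.2 - x₀‖ + ‖U p.1 x₀ - U t₀ x₀‖)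
      (𝓝 (t₀, x₀)) (𝓝 0) := by simpa using e1.add e2
  have h0 : Tendsto (fun p : ℝ × H => ‖U p.1 p.2 - U t₀ x₀‖) (𝓝 (t₀, x₀)) (𝓝 0) := by
    refine squeeze_zero (fun p => norm_nonneg _) (fun p => ?_) h1
    calc ‖U p.1 p.2 - U t₀ x₀‖
        ≤ ‖U p.1 p.2 - U p.1 x₀‖ + ‖U p.1 x₀ - U t₀ x₀‖ := norm_sub_le_norm_sub_add_norm_sub _ _ _
      _ = ‖p.2 - x₀‖ + ‖U p.1 x₀ - U t₀ x₀‖ := by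
          rw [← map_sub, Ugroup_norm hU]
  exact tendsto_iff_norm_sub_tendsto_zero.2 h0

lemma aesm_integrand (hU : IsUnitaryGroup U) {u : ℝ → H}
    (hu : AEStronglyMeasurable u (volume : Measure ℝ)) (T : ℝ) :
    AEStronglyMeasurable (fun s => U (T - s) (B (u s))) (volume : Measure ℝ) := by
  borelize H
  obtain ⟨g, hg, hug⟩ := hu
  refine ⟨fun s => U (T - s) (B (g s)), ?_, ?_⟩
  · have hmeas : Measurable fun s : ℝ => ((T - s, B (g s)) : ℝ × H) :=
      (measurable_const.sub measurable_id).prodMk (B.continuous.measurable.comp hg.measurable)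
    exact ((Ugroup_jointCont hU).measurable.comp hmeas).stronglyMeasurable
  · filter_upwards [hug] with s hs
    rw [hs]

lemma integrableOn_integrand (hU : IsUnitaryGroup U) (hB : IsOrthProj B) {u : ℝ → H}
    (hu : AEStronglyMeasurable u (volume : Measure ℝ)) (T : ℝ) {α β c : ℝ}
    (hb : ∀ᵐ t : ℝ ∂volume, t ∈ Ioo α β → ‖u t‖ ≤ c) :
    IntegrableOn (fun s => U (T - s) (B (u s))) (Ioo α β) volume := by
  refine Integrable.mono' (g := fun _ => c) (integrableOn_const measure_Ioo_lt_top.ne)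
    ((aesm_integrand hU hu T).restrict) ?_
  rw [ae_restrict_iff' measurableSet_Ioo]
  filter_upwards [hb] with t ht hmem
  rw [Ugroup_norm hU]
  exact le_trans (orthProj_norm_le hB _) (ht hmem)

lemma norm_integral_le_aux (hU : IsUnitaryGroup U) (hB : IsOrthProj B) {u : ℝ → H}
    (T : ℝ) {α β c : ℝ} (hαβ : α ≤ β)
    (hb : ∀ᵐ t : ℝ ∂volume, t ∈ Ioo α β → ‖u t‖ ≤ c) :
    ‖∫ s in Ioo α β, U (T - s) (B (u s))‖ ≤ c * (β - α) := by
  have hle : ‖∫ s in Ioo α β, U (T - s) (B (u s))‖ ≤ c * (volume (Ioo α β)).toReal := by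
    refine norm_setIntegral_le_of_norm_le_const_ae measure_Ioo_lt_top ?_
    rw [ae_restrict_iff' measurableSet_Ioo]
    filter_upwards [hb] with t ht hmem
    rw [Ugroup_norm hU]
    exact le_trans (orthProj_norm_le hB _) (ht hmem)
  rwa [Real.volume_Ioo, ENNReal.toReal_ofReal (by linarith)] at hle

lemma supNorm_nonneg (u : ℝ → H) (a b : ℝ) : 0 ≤ supNorm u a b :=
  Real.sInf_nonneg fun _ hc => hc.1

lemma supNorm_le {u : ℝ → H} {a b c : ℝ} (hc : 0 ≤ c)
    (hb : ∀ᵐ t : ℝ ∂volume, t ∈ Ioo a b → ‖u t‖ ≤ c) : supNorm u a b ≤ c :=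
  csInf_le ⟨0, fun _ hx => hx.1⟩ ⟨hc, hb⟩

lemma supNorm_is_bound {u : ℝ → H} {a b : ℝ}
    (hne : ∃ c : ℝ, ∀ᵐ t : ℝ ∂volume, t ∈ Ioo a b → ‖u t‖ ≤ c) :
    ∀ᵐ t : ℝ ∂volume, t ∈ Ioo a b → ‖u t‖ ≤ supNorm u a b := by
  obtain ⟨c₀, hc₀⟩ := hne
  set S : Set ℝ := {c : ℝ | 0 ≤ c ∧ ∀ᵐ t : ℝ ∂volume, t ∈ Ioo a b → ‖u t‖ ≤ c} with hS
  have hSne : S.Nonempty := ⟨max c₀ 0, le_max_right _ _, by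
    filter_upwards [hc₀] with t ht hmem; exact le_trans (ht hmem) (le_max_left _ _)⟩
  have key : ∀ n : ℕ, ∃ cn ∈ S, cn < sInf S + 1 / (n + 1) := fun n =>
    Real.lt_sInf_add_pos hSne (by positivity)
  choose cseq hmem hlt using key
  have hae : ∀ᵐ t : ℝ ∂volume, ∀ n : ℕ, t ∈ Ioo a b → ‖u t‖ ≤ cseq n :=
    ae_all_iff.2 fun n => (hmem n).2
  filter_upwards [hae] with t ht hmemIoo
  have : ∀ ε : ℝ, 0 < ε → ‖u t‖ ≤ sInf S + ε := by
    intro ε hε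
    obtain ⟨n, hn⟩ := exists_nat_one_div_lt hε
    exact le_trans (ht n hmemIoo) (le_of_lt (lt_of_lt_of_le (hlt n)
      (by linarith [le_of_lt hn])))
  have := le_of_forall_pos_le_add (fun ε hε => this ε hε)
  exact this

lemma integrand_indicator (T : ℝ) (A : Set ℝ) (u : ℝ → H) (s : ℝ) :
    U (T - s) (B (Set.indicator A u s)) = Set.indicator A (fun s => U (T - s) (B (u s))) s := by
  by_cases h : s ∈ A <;> simp [h]

lemma setIntegral_Ioo_split {f : ℝ → H} {a b c : ℝ} (hab : a ≤ b) (hbc : b ≤ c)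
    (hf : IntegrableOn f (Ioo a c) volume) :
    ∫ s in Ioo a c, f s = (∫ s in Ioo a b, f s) + ∫ s in Ioo b c, f s := by
  have h1 : IntegrableOn f (Ioc a b) volume := by
    rw [integrableOn_Ioc_iff_integrableOn_Ioo]
    exact hf.mono_set (Ioo_subset_Ioo le_rfl hbc)
  have h2 : IntegrableOn f (Ioc b c) volume := by
    rw [integrableOn_Ioc_iff_integrableOn_Ioo]
    exact hf.mono_set (Ioo_subset_Ioo hab le_rfl)
  calc ∫ s in Ioo a c, f s = ∫ s in Ioc a c, f s := (integral_Ioc_eq_integral_Ioo).symm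
    _ = ∫ s in Ioc a b ∪ Ioc b c, f s := by rw [Ioc_union_Ioc_eq_Ioc hab hbc]
    _ = (∫ s in Ioc a b, f s) + ∫ s in Ioc b c, f s :=
        setIntegral_union (Ioc_disjoint_Ioc_of_le le_rfl) measurableSet_Ioc h1 h2
    _ = (∫ s in Ioo a b, f s) + ∫ s in Ioo b c, f s := by
        rw [integral_Ioc_eq_integral_Ioo, integral_Ioc_eq_integral_Ioo]

lemma compensator (hU : IsUnitaryGroup U) (hB : IsOrthProj B) (hEC : EC U B) (T : ℝ)
    {a b : ℝ} (hab : a < b) :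
    ∃ C : ℝ, 0 < C ∧ ∀ ξ : H, ∃ w : ℝ → H,
      AEStronglyMeasurable w (volume : Measure ℝ) ∧
      (∀ᵐ t : ℝ ∂volume, ‖w t‖ ≤ C * ‖ξ‖) ∧
      (∀ t, t ∉ Ioo a b → w t = 0) ∧
      ∀ α β : ℝ, α ≤ a → b ≤ β →
        (∫ s in Ioo α β, U (T - s) (B (w s))) = ξ := by
  obtain ⟨C, hC, hall⟩ := hEC (b - a) (by linarith)
  refine ⟨C, hC, fun ξ => ?_⟩
  obtain ⟨u, hu, hub, hsteer⟩ := hall 0 (U (b - T) ξ)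
  simp only [stateT, map_zero, zero_add] at hsteer
  have hub' : ∀ᵐ t : ℝ ∂volume, t ∈ Ioo 0 (b - a) → ‖u t‖ ≤ C * ‖ξ‖ := by
    filter_upwards [hub] with t ht hmem
    have := ht hmem
    rwa [map_zero, sub_zero, Ugroup_norm hU] at this
  set w : ℝ → H := Set.indicator (Ioo a b) (fun s => u (s - a)) with hw
  have hqmp : Measure.QuasiMeasurePreserving (fun s : ℝ => s - a) volume volume :=
    (measurePreserving_sub_right volume a).quasiMeasurePreserving
  have hwm : AEStronglyMeasurable w (volume : Measure ℝ) :=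
    (hu.comp_quasiMeasurePreserving hqmp).indicator measurableSet_Ioo
  have hwb : ∀ᵐ t : ℝ ∂volume, ‖w t‖ ≤ C * ‖ξ‖ := by
    have htr : ∀ᵐ s : ℝ ∂volume, s - a ∈ Ioo 0 (b - a) → ‖u (s - a)‖ ≤ C * ‖ξ‖ :=
      hqmp.ae hub'
    filter_upwards [htr] with s hs
    by_cases hmem : s ∈ Ioo a b
    · rw [hw, Set.indicator_of_mem hmem]
      exact hs ⟨by simp [hmem.1], by simp; linarith [hmem.2]⟩
    · rw [hw, Set.indicator_of_notMem hmem]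
      simp only [norm_zero]
      positivity
  refine ⟨w, hwm, hwb, fun t ht => Set.indicator_of_notMem ht _, fun α β hα hβ => ?_⟩
  have hsub : Ioo a b ⊆ Ioo α β := Ioo_subset_Ioo hα hβ
  have step1 : (∫ s in Ioo α β, U (T - s) (B (w s)))
      = ∫ s in Ioo a b, U (T - s) (B (u (s - a))) := by
    simp only [hw, integrand_indicator]
    rw [setIntegral_indicator measurableSet_Ioo, inter_eq_self_of_subset_right hsub]
  have step2 : (∫ s in Ioo a b, U (T - s) (B (u (s - a))))
      = ∫ σ in Ioo 0 (b - a), U (T - (σ + a)) (B (u σ)) := by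
    rw [← integral_indicator measurableSet_Ioo, ← integral_indicator measurableSet_Ioo]
    rw [← integral_add_right_eq_self
      (fun s => Set.indicator (Ioo a b) (fun s' => U (T - s') (B (u (s' - a)))) s) a]
    congr 1
    funext σ
    by_cases hmem : σ ∈ Ioo 0 (b - a)
    · have hmem' : σ + a ∈ Ioo a b := ⟨by linarith [hmem.1], by linarith [hmem.2]⟩
      rw [Set.indicator_of_mem hmem', Set.indicator_of_mem hmem]
      simp
    · have hmem' : σ + a ∉ Ioo a b := by
        intro hc
        exact hmem ⟨by linarith [hc.1], by linarith [hc.2]⟩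
      rw [Set.indicator_of_notMem hmem', Set.indicator_of_notMem hmem]
  have step3 : (∫ σ in Ioo 0 (b - a), U (T - (σ + a)) (B (u σ)))
      = U (T - b) (∫ σ in Ioo 0 (b - a), U ((b - a) - σ) (B (u σ))) := by
    rw [← ContinuousLinearMap.integral_comp_comm _
      (integrableOn_integrand hU hB hu (b - a) hub')]
    congr 1
    funext σ
    have harg : T - (σ + a) = (T - b) + ((b - a) - σ) := by ring
    rw [harg, Ugroup_apply hU]
  rw [step1, step2, step3, hsteer]
  have : b - T = -(T - b) := by ring
  rw [this, Ugroup_cancel hU]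

lemma bddBelow_MNPimage (y₀ z_d : H) (T τ r : ℝ) :
    BddBelow ((fun u : ℝ → H => supNorm u τ T) '' WadmSet U B y₀ z_d T τ r) := by
  refine ⟨0, ?_⟩
  rintro x ⟨u, -, rfl⟩
  exact supNorm_nonneg u τ T

lemma MNP_le_of_mem {y₀ z_d : H} {T τ r : ℝ} {u : ℝ → H}
    (hu : u ∈ WadmSet U B y₀ z_d T τ r) :
    MNP U B y₀ z_d T τ r ≤ supNorm u τ T :=
  csInf_le (bddBelow_MNPimage y₀ z_d T τ r) ⟨u, hu, rfl⟩

lemma WadmSet_nonempty (hU : IsUnitaryGroup U) (hB : IsOrthProj B) (hEC : EC U B)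
    (y₀ z_d : H) {T τ r : ℝ} (hr : 0 ≤ r) (hτT : τ < T) :
    (WadmSet U B y₀ z_d T τ r).Nonempty := by
  obtain ⟨C, hC, hall⟩ := compensator hU hB hEC T hτT
  obtain ⟨w, hwm, hwb, -, hwint⟩ := hall (z_d - U T y₀)
  refine ⟨w, ⟨hwm, C * ‖z_d - U T y₀‖, ?_⟩, ?_⟩
  · filter_upwards [hwb] with t ht _; exact ht
  · rw [stateT, hwint τ T le_rfl le_rfl]
    have : U T y₀ + (z_d - U T y₀) - z_d = 0 := by abel
    rw [this, norm_zero]; exact hr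

lemma bound_exists {u : ℝ → H} {T τ : ℝ} (h : MemLinfty u 0 T) (hτ : 0 ≤ τ) :
    ∃ c : ℝ, ∀ᵐ t : ℝ ∂volume, t ∈ Ioo τ T → ‖u t‖ ≤ c := by
  obtain ⟨c, hc⟩ := h.2
  exact ⟨c, by filter_upwards [hc] with t ht hm; exact ht (Ioo_subset_Ioo hτ le_rfl hm)⟩

lemma MNP_lb (hU : IsUnitaryGroup U) (hB : IsOrthProj B) (hEC : EC U B)
    (y₀ z_d : H) {T τ r : ℝ} (hr0 : 0 ≤ r) (hτ0 : 0 ≤ τ) (hτT : τ < T) :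
    (‖U T y₀ - z_d‖ - r) / (T - τ) ≤ MNP U B y₀ z_d T τ r := by
  refine le_csInf ((WadmSet_nonempty hU hB hEC y₀ z_d hr0 hτT).image _) ?_
  rintro x ⟨u, hu, rfl⟩
  have hsb := supNorm_is_bound (bound_exists hu.1 hτ0)
  have hJ : ‖∫ s in Ioo τ T, U (T - s) (B (u s))‖ ≤ supNorm u τ T * (T - τ) :=
    norm_integral_le_aux hU hB T (le_of_lt hτT) hsb
  have h3 := hu.2
  have h4 : ‖U T y₀ - z_d‖ ≤ ‖stateT U B T τ u y₀ - z_d‖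
      + ‖∫ s in Ioo τ T, U (T - s) (B (u s))‖ := by
    have he : U T y₀ - z_d = (stateT U B T τ u y₀ - z_d)
        - ∫ s in Ioo τ T, U (T - s) (B (u s)) := by
      rw [stateT]; abel
    rw [he]
    exact norm_sub_le _ _
  rw [div_le_iff₀ (by linarith)]
  linarith

lemma MNP_pos (hU : IsUnitaryGroup U) (hB : IsOrthProj B) (hEC : EC U B)
    (y₀ z_d : H) {T τ r : ℝ} (hr : r ∈ Ioo (0 : ℝ) ‖U T y₀ - z_d‖)
    (hτ0 : 0 ≤ τ) (hτT : τ < T) : 0 < MNP U B y₀ z_d T τ r := by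
  refine lt_of_lt_of_le ?_ (MNP_lb hU hB hEC y₀ z_d (le_of_lt hr.1) hτ0 hτT)
  exact div_pos (by linarith [hr.2]) (by linarith)

lemma memLinfty_indicator {u : ℝ → H} {c τ₂ T : ℝ}
    (hm : AEStronglyMeasurable u (volume : Measure ℝ))
    (hb : ∀ᵐ t : ℝ ∂volume, t ∈ Ioo τ₂ T → ‖u t‖ ≤ c) :
    MemLinfty (Set.indicator (Ioo τ₂ T) u : ℝ → H) 0 T := by
  refine ⟨hm.indicator measurableSet_Ioo, max c 0, ?_⟩
  filter_upwards [hb] with t ht _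
  by_cases h : t ∈ Ioo τ₂ T
  · rw [Set.indicator_of_mem h]; exact (ht h).trans (le_max_left _ _)
  · rw [Set.indicator_of_notMem h]; simp

lemma stateT_indicator (hU : IsUnitaryGroup U) (y₀ : H) {T τ₁ τ₂ : ℝ} (h : τ₁ ≤ τ₂)
    (u : ℝ → H) :
    stateT U B T τ₁ (Set.indicator (Ioo τ₂ T) u) y₀ = stateT U B T τ₂ u y₀ := by
  rw [stateT, stateT]
  congr 1
  simp only [integrand_indicator]
  rw [setIntegral_indicator measurableSet_Ioo,
    inter_eq_self_of_subset_right (Ioo_subset_Ioo h le_rfl)]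

lemma MNP_mono (hU : IsUnitaryGroup U) (hB : IsOrthProj B) (hEC : EC U B)
    (y₀ z_d : H) {T τ₁ τ₂ r : ℝ} (hr0 : 0 ≤ r) (hτ0 : 0 ≤ τ₁) (h12 : τ₁ ≤ τ₂)
    (hτT : τ₂ < T) :
    MNP U B y₀ z_d T τ₁ r ≤ MNP U B y₀ z_d T τ₂ r := by
  refine le_csInf ((WadmSet_nonempty hU hB hEC y₀ z_d hr0 hτT).image _) ?_
  rintro x ⟨u, hu, rfl⟩
  obtain ⟨c, hc⟩ := bound_exists hu.1 (le_trans hτ0 h12)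
  have hsb := supNorm_is_bound ⟨c, hc⟩
  have hmem : Set.indicator (Ioo τ₂ T) u ∈ WadmSet U B y₀ z_d T τ₁ r := by
    refine ⟨memLinfty_indicator hu.1.1 hc, ?_⟩
    rw [stateT_indicator hU y₀ h12 u]
    exact hu.2
  refine le_trans (MNP_le_of_mem hmem) ?_
  refine supNorm_le (supNorm_nonneg _ _ _) ?_
  filter_upwards [hsb] with t ht _
  by_cases h : t ∈ Ioo τ₂ T
  · rw [Set.indicator_of_mem h]; exact ht h
  · rw [Set.indicator_of_notMem h]; simp [supNorm_nonneg]

lemma integral_indicator_window (T : ℝ) {τ₁ τ₂ : ℝ} (h : τ₁ ≤ τ₂) (u : ℝ → H) :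
    (∫ s in Ioo τ₁ T, U (T - s) (B (Set.indicator (Ioo τ₂ T) u s)))
      = ∫ s in Ioo τ₂ T, U (T - s) (B (u s)) := by
  simp only [integrand_indicator]
  rw [setIntegral_indicator measurableSet_Ioo,
    inter_eq_self_of_subset_right (Ioo_subset_Ioo h le_rfl)]

lemma indicator_bound {u : ℝ → H} {m τ₁ τ₂ T : ℝ} (hm : 0 ≤ m)
    (hb : ∀ᵐ t : ℝ ∂volume, t ∈ Ioo τ₂ T → ‖u t‖ ≤ m) :
    ∀ᵐ t : ℝ ∂volume, t ∈ Ioo τ₁ T → ‖Set.indicator (Ioo τ₂ T) u t‖ ≤ m := by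
  filter_upwards [hb] with t ht _
  by_cases h : t ∈ Ioo τ₂ T
  · rw [Set.indicator_of_mem h]; exact ht h
  · rw [Set.indicator_of_notMem h]; simpa

lemma MNP_transfer (hU : IsUnitaryGroup U) (hB : IsOrthProj B) (hEC : EC U B)
    (y₀ z_d : H) {T r δ : ℝ} (hr0 : 0 ≤ r) (hδ : 0 < δ) (hδT : δ < T) :
    ∃ C : ℝ, 0 < C ∧ ∀ τ₁ τ₂ : ℝ, 0 ≤ τ₁ → τ₁ ≤ τ₂ → τ₂ < T - δ → ∀ ε : ℝ, 0 < ε →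
      MNP U B y₀ z_d T τ₂ r ≤ (MNP U B y₀ z_d T τ₁ r + ε) * (1 + C * (τ₂ - τ₁)) := by
  obtain ⟨C, hC, hcomp⟩ := compensator hU hB hEC T (show T - δ < T by linarith)
  refine ⟨C, hC, fun τ₁ τ₂ h0 h12 h2 ε hε => ?_⟩
  have hτ₂T : τ₂ < T := by linarith
  have hτ₁T : τ₁ < T := by linarith
  -- get a near optimal control for τ₁
  obtain ⟨x, ⟨u, hu, rfl⟩, hx⟩ := Real.lt_sInf_add_pos
    ((WadmSet_nonempty hU hB hEC y₀ z_d hr0 hτ₁T).image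
      (fun u : ℝ → H => supNorm u τ₁ T)) hε
  set m := supNorm u τ₁ T with hm
  have hm0 : 0 ≤ m := supNorm_nonneg _ _ _
  have hub : ∀ᵐ t : ℝ ∂volume, t ∈ Ioo τ₁ T → ‖u t‖ ≤ m :=
    supNorm_is_bound (bound_exists hu.1 h0)
  have hub2 : ∀ᵐ t : ℝ ∂volume, t ∈ Ioo τ₂ T → ‖u t‖ ≤ m := by
    filter_upwards [hub] with t ht hmem
    exact ht (Ioo_subset_Ioo h12 le_rfl hmem)
  have hub12 : ∀ᵐ t : ℝ ∂volume, t ∈ Ioo τ₁ τ₂ → ‖u t‖ ≤ m := by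
    filter_upwards [hub] with t ht hmem
    exact ht (Ioo_subset_Ioo le_rfl (le_of_lt hτ₂T) hmem)
  set ξ := ∫ s in Ioo τ₁ τ₂, U (T - s) (B (u s)) with hξ
  have hξn : ‖ξ‖ ≤ m * (τ₂ - τ₁) := norm_integral_le_aux hU hB T h12 hub12
  obtain ⟨w, hwm, hwb, hwsupp, hwint⟩ := hcomp ξ
  set v : ℝ → H := Set.indicator (Ioo τ₂ T) u + w with hv
  -- integrability pieces
  have hi1 : IntegrableOn (fun s => U (T - s) (B (Set.indicator (Ioo τ₂ T) u s)))
      (Ioo τ₂ T) volume :=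
    integrableOn_integrand hU hB (hu.1.1.indicator measurableSet_Ioo) T
      (indicator_bound hm0 hub2)
  have hwb' : ∀ᵐ t : ℝ ∂volume, t ∈ Ioo τ₂ T → ‖w t‖ ≤ C * ‖ξ‖ := by
    filter_upwards [hwb] with t ht _; exact ht
  have hi2 : IntegrableOn (fun s => U (T - s) (B (w s))) (Ioo τ₂ T) volume :=
    integrableOn_integrand hU hB hwm T hwb'
  -- state computation
  have hstate : stateT U B T τ₂ v y₀ = stateT U B T τ₁ u y₀ := by
    have hfun : ∀ s : ℝ, U (T - s) (B (v s))
        = U (T - s) (B (Set.indicator (Ioo τ₂ T) u s)) + U (T - s) (B (w s)) := by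
      intro s
      simp [hv, Pi.add_apply, map_add]
    have hsplit : stateT U B T τ₁ u y₀
        = U T y₀ + (ξ + ∫ s in Ioo τ₂ T, U (T - s) (B (u s))) := by
      rw [stateT, setIntegral_Ioo_split h12 (le_of_lt hτ₂T)
        (integrableOn_integrand hU hB hu.1.1 T hub)]
    rw [stateT]
    simp only [hfun]
    rw [integral_add hi1 hi2, integral_indicator_window T le_rfl u,
      hwint τ₂ T (le_of_lt h2) le_rfl, hsplit]
    abel
  -- membership
  have hmem : v ∈ WadmSet U B y₀ z_d T τ₂ r := by
    refine ⟨⟨(hu.1.1.indicator measurableSet_Ioo).add hwm, m + C * ‖ξ‖, ?_⟩, ?_⟩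
    · filter_upwards [indicator_bound hm0 hub2 (τ₁ := 0), hwb] with t h1 h2 hmem'
      calc ‖v t‖ ≤ ‖Set.indicator (Ioo τ₂ T) u t‖ + ‖w t‖ := norm_add_le _ _
        _ ≤ m + C * ‖ξ‖ := add_le_add (h1 hmem') h2
    · rw [hstate]; exact hu.2
  -- norm estimate
  have hsn : supNorm v τ₂ T ≤ m + C * ‖ξ‖ := by
    refine supNorm_le (by positivity) ?_
    filter_upwards [indicator_bound hm0 hub2 (τ₁ := τ₂), hwb] with t h1 h2 hmem'
    calc ‖v t‖ ≤ ‖Set.indicator (Ioo τ₂ T) u t‖ + ‖w t‖ := norm_add_le _ _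
      _ ≤ m + C * ‖ξ‖ := add_le_add (h1 hmem') h2
  have final : MNP U B y₀ z_d T τ₂ r ≤ m + C * ‖ξ‖ :=
    le_trans (MNP_le_of_mem hmem) hsn
  have hmlt : m < MNP U B y₀ z_d T τ₁ r + ε := hx
  have hCn : 0 ≤ C * (τ₂ - τ₁) := by
    have : 0 ≤ τ₂ - τ₁ := by linarith
    positivity
  calc MNP U B y₀ z_d T τ₂ r ≤ m + C * ‖ξ‖ := final
    _ ≤ m + C * (m * (τ₂ - τ₁)) := by
        have := mul_le_mul_of_nonneg_left hξn (le_of_lt hC)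
        linarith
    _ = m * (1 + C * (τ₂ - τ₁)) := by ring
    _ ≤ (MNP U B y₀ z_d T τ₁ r + ε) * (1 + C * (τ₂ - τ₁)) := by
        refine mul_le_mul_of_nonneg_right (le_of_lt hmlt) (by linarith)

lemma MNP_strict (hU : IsUnitaryGroup U) (hB : IsOrthProj B) (hEC : EC U B)
    (y₀ z_d : H) {T r τ₁ τ₂ : ℝ} (hr : r ∈ Ioo (0 : ℝ) ‖U T y₀ - z_d‖)
    (h0 : 0 ≤ τ₁) (h12 : τ₁ < τ₂) (h2T : τ₂ < T) :
    MNP U B y₀ z_d T τ₁ r < MNP U B y₀ z_d T τ₂ r := by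
  set M₂ := MNP U B y₀ z_d T τ₂ r with hM₂
  have hM₂pos : 0 < M₂ := MNP_pos hU hB hEC y₀ z_d hr (by linarith) h2T
  obtain ⟨C, hC, hcomp⟩ := compensator hU hB hEC T h12
  set K := r + ‖U T y₀ - z_d‖ with hK
  have hKpos : 0 < K := by have := hr.1; have := hr.2; positivity
  set lam := min (1/2 : ℝ) (M₂ / (2 * C * K)) with hlam
  have hlam_pos : 0 < lam := lt_min (by norm_num) (by positivity)
  have hlam_le : lam ≤ 1/2 := min_le_left _ _
  have hCK : C * lam * K ≤ M₂ / 2 := by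
    have h1 : lam * (2 * C * K) ≤ M₂ := by
      rw [← le_div_iff₀ (by positivity)]
      exact min_le_right _ _
    nlinarith
  set ε := lam * M₂ / 2 with hε
  have hεpos : 0 < ε := by positivity
  obtain ⟨x, ⟨u, hu, rfl⟩, hx⟩ := Real.lt_sInf_add_pos
    ((WadmSet_nonempty hU hB hEC y₀ z_d (le_of_lt hr.1) h2T).image
      (fun u : ℝ → H => supNorm u τ₂ T)) hεpos
  set m := supNorm u τ₂ T with hm
  have hm0 : 0 ≤ m := supNorm_nonneg _ _ _
  have hub2 : ∀ᵐ t : ℝ ∂volume, t ∈ Ioo τ₂ T → ‖u t‖ ≤ m :=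
    supNorm_is_bound (bound_exists hu.1 (by linarith))
  set S₂ := stateT U B T τ₂ u y₀ with hS₂
  set ξ := lam • (S₂ - U T y₀) with hξ
  have hξ0 : ‖S₂ - U T y₀‖ ≤ K := by
    have h1 : ‖S₂ - U T y₀‖ ≤ ‖S₂ - z_d‖ + ‖z_d - U T y₀‖ := by
      have he : S₂ - U T y₀ = (S₂ - z_d) + (z_d - U T y₀) := by abel
      rw [he]; exact norm_add_le _ _
    have h2 : ‖z_d - U T y₀‖ = ‖U T y₀ - z_d‖ := norm_sub_rev _ _
    have h3 := hu.2
    rw [hK]; rw [h2] at h1; linarith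
  have hξn : ‖ξ‖ ≤ lam * K := by
    rw [hξ, norm_smul, Real.norm_eq_abs, abs_of_pos hlam_pos]
    exact mul_le_mul_of_nonneg_left hξ0 (le_of_lt hlam_pos)
  obtain ⟨w, hwm, hwb, hwsupp, hwint⟩ := hcomp ξ
  set v : ℝ → H := (1 - lam) • Set.indicator (Ioo τ₂ T) u + w with hv
  have hfun : ∀ s : ℝ, U (T - s) (B (v s))
      = (1 - lam) • U (T - s) (B (Set.indicator (Ioo τ₂ T) u s)) + U (T - s) (B (w s)) := by
    intro s
    have : v s = (1 - lam) • Set.indicator (Ioo τ₂ T) u s + w s := rfl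
    rw [this, map_add, map_add, ContinuousLinearMap.map_smul_of_tower,
      ContinuousLinearMap.map_smul_of_tower]
  have hi1 : IntegrableOn (fun s => U (T - s) (B (Set.indicator (Ioo τ₂ T) u s)))
      (Ioo τ₁ T) volume :=
    integrableOn_integrand hU hB (hu.1.1.indicator measurableSet_Ioo) T
      (indicator_bound hm0 hub2)
  have hwb' : ∀ᵐ t : ℝ ∂volume, t ∈ Ioo τ₁ T → ‖w t‖ ≤ C * ‖ξ‖ := by
    filter_upwards [hwb] with t ht _; exact ht
  have hi2 : IntegrableOn (fun s => U (T - s) (B (w s))) (Ioo τ₁ T) volume :=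
    integrableOn_integrand hU hB hwm T hwb'
  have hstate : stateT U B T τ₁ v y₀ = S₂ := by
    have hJ : (∫ s in Ioo τ₂ T, U (T - s) (B (u s))) = S₂ - U T y₀ := by
      rw [hS₂, stateT]; abel
    rw [stateT]
    simp only [hfun]
    have hi1' : IntegrableOn
        (fun s => (1 - lam) • U (T - s) (B (Set.indicator (Ioo τ₂ T) u s)))
        (Ioo τ₁ T) volume := by exact hi1.smul (1 - lam)
    rw [integral_add hi1' hi2, integral_smul,
      integral_indicator_window T (le_of_lt h12) u,
      hwint τ₁ T le_rfl (le_of_lt h2T), hJ, hξ]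
    module
  have hmem : v ∈ WadmSet U B y₀ z_d T τ₁ r := by
    refine ⟨⟨((hu.1.1.indicator measurableSet_Ioo).const_smul _).add hwm,
      (1 - lam) * m + C * ‖ξ‖, ?_⟩, ?_⟩
    · filter_upwards [indicator_bound hm0 hub2 (τ₁ := 0), hwb] with t h1 h2 hmem'
      calc ‖v t‖ ≤ ‖(1 - lam) • Set.indicator (Ioo τ₂ T) u t‖ + ‖w t‖ := norm_add_le _ _
        _ ≤ (1 - lam) * m + C * ‖ξ‖ := by
            refine add_le_add ?_ h2
            rw [norm_smul, Real.norm_eq_abs, abs_of_nonneg (by linarith)]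
            exact mul_le_mul_of_nonneg_left (h1 hmem') (by linarith)
    · rw [hstate]; exact hu.2
  -- key pointwise bound: disjoint supports give a max bound
  set K' := max ((1 - lam) * m) (C * lam * K) with hK'
  have hsn : supNorm v τ₁ T ≤ K' := by
    refine supNorm_le (le_trans (mul_nonneg (by linarith [hlam_le]) hm0)
      (le_max_left _ _)) ?_
    filter_upwards [hub2, hwb] with t h1 h2 hmem'
    by_cases hcase : t ∈ Ioo τ₂ T
    · have hw0 : w t = 0 := hwsupp t (by
        intro hc
        exact absurd hc.2 (not_lt.2 (le_of_lt hcase.1)))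
      have : v t = (1 - lam) • u t := by
        rw [hv]
        show (1 - lam) • Set.indicator (Ioo τ₂ T) u t + w t = _
        rw [hw0, Set.indicator_of_mem hcase, add_zero]
      rw [this, norm_smul, Real.norm_eq_abs, abs_of_nonneg (by linarith)]
      exact le_trans (mul_le_mul_of_nonneg_left (h1 hcase) (by linarith)) (le_max_left _ _)
    · have hind : Set.indicator (Ioo τ₂ T) u t = 0 := Set.indicator_of_notMem hcase _
      have : v t = w t := by
        rw [hv]
        show (1 - lam) • Set.indicator (Ioo τ₂ T) u t + w t = _
        rw [hind, smul_zero, zero_add]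
      rw [this]
      refine le_trans h2 (le_trans ?_ (le_max_right _ _))
      calc C * ‖ξ‖ ≤ C * (lam * K) := mul_le_mul_of_nonneg_left hξn (le_of_lt hC)
        _ = C * lam * K := by ring
  have hKlt : K' < M₂ := by
    refine max_lt ?_ (lt_of_le_of_lt hCK (by linarith))
    have h1 : m < M₂ + ε := hx
    have h2 : (1 - lam) * m ≤ (1 - lam) * (M₂ + ε) :=
      mul_le_mul_of_nonneg_left (le_of_lt h1) (by linarith)
    have h3 : (1 - lam) * (M₂ + ε) < M₂ := by
      rw [hε]; nlinarith
    linarith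
  exact lt_of_le_of_lt (le_trans (MNP_le_of_mem hmem) hsn) hKlt

lemma MNP_continuousOn (hU : IsUnitaryGroup U) (hB : IsOrthProj B) (hEC : EC U B)
    (y₀ z_d : H) {T r : ℝ} (hr : r ∈ Ioo (0 : ℝ) ‖U T y₀ - z_d‖) :
    ContinuousOn (fun τ => MNP U B y₀ z_d T τ r) (Ico (0 : ℝ) T) := by
  intro τ₀ hτ₀
  obtain ⟨hτ₀0, hτ₀T⟩ := hτ₀
  have hr0 : 0 ≤ r := le_of_lt hr.1
  set δ : ℝ := (T - τ₀) / 2 with hδdef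
  have hδ : 0 < δ := by rw [hδdef]; linarith
  have hδT : δ < T := by rw [hδdef]; linarith
  obtain ⟨C, hC, htr⟩ := MNP_transfer hU hB hEC y₀ z_d hr0 hδ hδT
  set f := fun τ => MNP U B y₀ z_d T τ r with hf
  have hM₀0 : 0 < f τ₀ := MNP_pos hU hB hEC y₀ z_d hr hτ₀0 hτ₀T
  set M₀ := f τ₀ with hM₀
  rw [Metric.continuousWithinAt_iff]
  intro ε' hε'
  set e := ε' / 4 with he
  have he0 : 0 < e := by positivity
  set η := min ((T - τ₀) / 4) (ε' / (4 * (C * (M₀ + e) + 1))) with hη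
  have hη0 : 0 < η := lt_min (by linarith) (by positivity)
  refine ⟨η, hη0, ?_⟩
  intro x hx hdist
  rw [Real.dist_eq] at hdist ⊢
  have hx0 : (0 : ℝ) ≤ x := hx.1
  have hxT : x < T := hx.2
  have hη1 : η ≤ (T - τ₀) / 4 := min_le_left _ _
  have hη2 : η ≤ ε' / (4 * (C * (M₀ + e) + 1)) := min_le_right _ _
  have hCbound : C * η * (M₀ + e) ≤ ε' / 4 := by
    have h1 : η * (4 * (C * (M₀ + e) + 1)) ≤ ε' := by
      rw [← le_div_iff₀ (by positivity)]; exact hη2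
    nlinarith [hC.le, hM₀0.le, he0.le, hη0.le]
  rcases le_total τ₀ x with hcase | hcase
  · have hmono : f τ₀ ≤ f x := MNP_mono hU hB hEC y₀ z_d hr0 hτ₀0 hcase hxT
    have habs : |x - τ₀| = x - τ₀ := abs_of_nonneg (by linarith)
    rw [habs] at hdist
    have hlt : x < T - δ := by
      rw [hδdef]; linarith
    have hkey := htr τ₀ x hτ₀0 hcase hlt e he0
    have hfx : f x - f τ₀ ≤ e + C * (x - τ₀) * (M₀ + e) := by nlinarith [hkey]
    have s1 : C * (x - τ₀) ≤ C * η := mul_le_mul_of_nonneg_left hdist.le hC.le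
    have s2 : C * (x - τ₀) * (M₀ + e) ≤ C * η * (M₀ + e) :=
      mul_le_mul_of_nonneg_right s1 (by linarith)
    rw [abs_of_nonneg (by linarith : (0 : ℝ) ≤ f x - f τ₀)]
    linarith
  · have hmono : f x ≤ f τ₀ := MNP_mono hU hB hEC y₀ z_d hr0 hx0 hcase hτ₀T
    have habs : |x - τ₀| = τ₀ - x := by
      rw [abs_sub_comm]; exact abs_of_nonneg (by linarith)
    rw [habs] at hdist
    have hlt : τ₀ < T - δ := by rw [hδdef]; linarith
    have hkey := htr x τ₀ hx0 hcase hlt e he0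
    have hfx0 : 0 < f x := MNP_pos hU hB hEC y₀ z_d hr hx0 hxT
    have hfx : f τ₀ - f x ≤ e + C * (τ₀ - x) * (f x + e) := by nlinarith [hkey]
    have s1 : C * (τ₀ - x) ≤ C * η := mul_le_mul_of_nonneg_left hdist.le hC.le
    have s2 : C * (τ₀ - x) * (f x + e) ≤ C * η * (M₀ + e) := by
      refine mul_le_mul s1 (by linarith) (by linarith) ?_
      positivity
    rw [abs_of_nonpos (by linarith : f x - f τ₀ ≤ 0), neg_sub]
    linarith

lemma MNP_blowup (hU : IsUnitaryGroup U) (hB : IsOrthProj B) (hEC : EC U B)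
    (y₀ z_d : H) {T r : ℝ} (hr : r ∈ Ioo (0 : ℝ) ‖U T y₀ - z_d‖) (hT : 0 < T) :
    Tendsto (fun τ => MNP U B y₀ z_d T τ r) (𝓝[<] T) atTop := by
  have hr0 : 0 ≤ r := le_of_lt hr.1
  have hev : ∀ᶠ τ in 𝓝[<] T,
      (‖U T y₀ - z_d‖ - r) / (T - τ) ≤ MNP U B y₀ z_d T τ r := by
    filter_upwards [Ioo_mem_nhdsLT_of_mem
      (⟨half_lt_self hT, le_rfl⟩ : T ∈ Ioc (T / 2) T)] with τ hτ
    exact MNP_lb hU hB hEC y₀ z_d hr0 (by linarith [hτ.1, half_pos hT]) hτ.2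
  refine tendsto_atTop_mono' _ hev ?_
  have h1 : Tendsto (fun τ : ℝ => T - τ) (𝓝[<] T) (𝓝[>] 0) := by
    refine tendsto_nhdsWithin_of_tendsto_nhds_of_eventually_within _ ?_ ?_
    · have : Tendsto (fun τ : ℝ => T - τ) (𝓝 T) (𝓝 (T - T)) :=
        (tendsto_const_nhds.sub tendsto_id)
      rw [sub_self] at this
      exact this.mono_left nhdsWithin_le_nhds
    · filter_upwards [self_mem_nhdsWithin] with τ hτ
      exact sub_pos.2 (mem_Iio.1 hτ)
  have h2 : Tendsto (fun τ : ℝ => (T - τ)⁻¹) (𝓝[<] T) atTop :=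
    tendsto_inv_nhdsGT_zero.comp h1
  have h3 : Tendsto (fun τ : ℝ => (‖U T y₀ - z_d‖ - r) * (T - τ)⁻¹) (𝓝[<] T) atTop :=
    (tendsto_const_mul_atTop_of_pos (by linarith [hr.2])).2 h2
  simpa [div_eq_mul_inv] using h3

lemma tauTP_eq (hU : IsUnitaryGroup U) (hB : IsOrthProj B) (hEC : EC U B)
    (y₀ z_d : H) {T r M τs : ℝ} (hr : r ∈ Ioo (0 : ℝ) ‖U T y₀ - z_d‖)
    (hτs : τs ∈ Ico (0 : ℝ) T) (hfs : MNP U B y₀ z_d T τs r = M) :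
    tauTP U B y₀ z_d T M r = τs := by
  have hr0 : 0 ≤ r := le_of_lt hr.1
  have hMpos : 0 < M := hfs ▸ MNP_pos hU hB hEC y₀ z_d hr hτs.1 hτs.2
  -- every admissible u has tauOf u ≤ τs
  have upper : ∀ u ∈ VadmSet U B y₀ z_d T M r, tauOf U B y₀ z_d T r u ≤ τs := by
    rintro u ⟨τ₀, hτ₀Ico, huU, hur⟩
    have hfle : ∀ τ : ℝ, τ ∈ Ico (0 : ℝ) T → τ₀ ≤ τ →
        ‖stateT U B T τ u y₀ - z_d‖ ≤ r → τ ≤ τs := by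
      intro τ hτIco hτ₀τ hτr
      have hbound : ∀ᵐ t : ℝ ∂volume, t ∈ Ioo τ T → ‖u t‖ ≤ M := by
        filter_upwards [huU.2] with t ht hmem
        exact ht (Ioo_subset_Ioo hτ₀τ le_rfl hmem)
      have humem : u ∈ WadmSet U B y₀ z_d T τ r := ⟨huU.1, hτr⟩
      have hfM : MNP U B y₀ z_d T τ r ≤ M :=
        le_trans (MNP_le_of_mem humem) (supNorm_le hMpos.le hbound)
      by_contra hcon
      push_neg at hcon
      exact absurd (hfs ▸ MNP_strict hU hB hEC y₀ z_d hr hτs.1 hcon hτIco.2)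
        (not_lt.2 hfM)
    have hτ₀s : τ₀ ≤ τs := hfle τ₀ hτ₀Ico le_rfl hur
    refine Real.sSup_le ?_ (le_trans hτ₀Ico.1 hτ₀s)
    rintro τ ⟨hτIco, hτr⟩
    rcases le_total τ τ₀ with hc | hc
    · exact le_trans hc hτ₀s
    · exact hfle τ hτIco hc hτr
  have hupper : tauTP U B y₀ z_d T M r ≤ τs := by
    refine Real.sSup_le ?_ hτs.1
    rintro x ⟨u, hu, rfl⟩
    exact upper u hu
  -- lower bound
  have hbddA : ∀ u : ℝ → H, BddAbove
      {τ : ℝ | τ ∈ Ico (0 : ℝ) T ∧ ‖stateT U B T τ u y₀ - z_d‖ ≤ r} :=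
    fun u => ⟨T, fun τ hτ => le_of_lt hτ.1.2⟩
  have hbddI : BddAbove (tauOf U B y₀ z_d T r '' VadmSet U B y₀ z_d T M r) :=
    ⟨τs, by rintro x ⟨u, hu, rfl⟩; exact upper u hu⟩
  have lower : ∀ τ : ℝ, 0 ≤ τ → τ < T → MNP U B y₀ z_d T τ r < M →
      τ ≤ tauTP U B y₀ z_d T M r := by
    intro τ hτ0 hτT hlt
    obtain ⟨x, ⟨u, hu, rfl⟩, hxM⟩ := exists_lt_of_csInf_lt
      ((WadmSet_nonempty hU hB hEC y₀ z_d hr0 hτT).image _) hlt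
    obtain ⟨c, hc⟩ := bound_exists hu.1 hτ0
    have hsb := supNorm_is_bound ⟨c, hc⟩
    set u' := Set.indicator (Ioo τ T) u with hu'
    have hstate' : stateT U B T τ u' y₀ = stateT U B T τ u y₀ :=
      stateT_indicator hU y₀ le_rfl u
    have hu'V : u' ∈ VadmSet U B y₀ z_d T M r := by
      refine ⟨τ, ⟨hτ0, hτT⟩, ⟨memLinfty_indicator hu.1.1 hc, ?_⟩, ?_⟩
      · filter_upwards [indicator_bound (τ₁ := τ) (supNorm_nonneg u τ T) hsb]
          with t ht hmem
        exact le_trans (ht hmem) (le_of_lt hxM)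
      · rw [hstate']; exact hu.2
    have h1 : τ ≤ tauOf U B y₀ z_d T r u' := by
      refine le_csSup (hbddA u') ⟨⟨hτ0, hτT⟩, ?_⟩
      rw [hstate']; exact hu.2
    exact le_trans h1 (le_csSup hbddI ⟨u', hu'V, rfl⟩)
  have hlower : τs ≤ tauTP U B y₀ z_d T M r := by
    rcases eq_or_lt_of_le hτs.1 with h0 | h0
    · -- τs = 0
      rw [← h0]
      rcases Set.eq_empty_or_nonempty (VadmSet U B y₀ z_d T M r) with hV | hV
      · rw [tauTP, hV, Set.image_empty, Real.sSup_empty]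
      · obtain ⟨u, hu⟩ := hV
        obtain ⟨τ₀, hτ₀Ico, huU, hur⟩ := hu
        have h1 : τ₀ ≤ tauOf U B y₀ z_d T r u := le_csSup (hbddA u) ⟨hτ₀Ico, hur⟩
        exact le_trans hτ₀Ico.1 (le_trans h1 (le_csSup hbddI ⟨u, ⟨τ₀, hτ₀Ico, huU, hur⟩, rfl⟩))
    · by_contra hcon
      push_neg at hcon
      have htau0 : 0 ≤ tauTP U B y₀ z_d T M r := by
        have := lower (τs / 2) (by linarith) (by linarith [hτs.2])
          (hfs ▸ MNP_strict hU hB hEC y₀ z_d hr (by linarith) (by linarith) hτs.2)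
        linarith
      set τ := (tauTP U B y₀ z_d T M r + τs) / 2 with hτdef
      have hτ0 : 0 ≤ τ := by rw [hτdef]; linarith
      have hτlt : τ < τs := by rw [hτdef]; linarith
      have hτT : τ < T := lt_trans hτlt hτs.2
      have hflt : MNP U B y₀ z_d T τ r < M :=
        hfs ▸ MNP_strict hU hB hEC y₀ z_d hr hτ0 hτlt hτs.2
      have := lower τ hτ0 hτT hflt
      rw [hτdef] at this
      linarith
  linarith

end AuxDev

theorem mnp_map_properties
    (U : ℝ → H →L[ℂ] H) (B : H →L[ℂ] H) (hU : IsUnitaryGroup U) (hB : IsOrthProj B)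
    (hEC : EC U B) (hECrev : EC (fun t => U (-t)) B)
    (hUC : UC U B)
    (T : ℝ) (hT : 0 < T) (y₀ z_d : H) (hrT : 0 < ‖U T y₀ - z_d‖)
    (r : ℝ) (hr : r ∈ Ioo (0 : ℝ) ‖U T y₀ - z_d‖) :
    StrictMonoOn (fun τ => MNP U B y₀ z_d T τ r) (Ico (0 : ℝ) T) ∧
    ContinuousOn (fun τ => MNP U B y₀ z_d T τ r) (Ico (0 : ℝ) T) ∧
    (∀ τ ∈ Ico (0 : ℝ) T, MNP U B y₀ z_d T 0 r ≤ MNP U B y₀ z_d T τ r) ∧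
    Tendsto (fun τ => MNP U B y₀ z_d T τ r) (𝓝[<] T) atTop ∧
    (∀ M : ℝ, MNP U B y₀ z_d T 0 r ≤ M → MNP U B y₀ z_d T (tauTP U B y₀ z_d T M r) r = M) ∧
    (∀ τ ∈ Ico (0 : ℝ) T, tauTP U B y₀ z_d T (MNP U B y₀ z_d T τ r) r = τ) ∧
    InvOn (fun M => tauTP U B y₀ z_d T M r) (fun τ => MNP U B y₀ z_d T τ r)
      (Ico (0 : ℝ) T) (Ici (MNP U B y₀ z_d T 0 r)) := by
  have hr0 : 0 ≤ r := le_of_lt hr.1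
  have p1 : StrictMonoOn (fun τ => MNP U B y₀ z_d T τ r) (Ico (0 : ℝ) T) :=
    fun τ₁ h1 τ₂ h2 hlt => MNP_strict hU hB hEC y₀ z_d hr h1.1 hlt h2.2
  have p2 : ContinuousOn (fun τ => MNP U B y₀ z_d T τ r) (Ico (0 : ℝ) T) :=
    MNP_continuousOn hU hB hEC y₀ z_d hr
  have p3 : ∀ τ ∈ Ico (0 : ℝ) T, MNP U B y₀ z_d T 0 r ≤ MNP U B y₀ z_d T τ r :=
    fun τ hτ => MNP_mono hU hB hEC y₀ z_d hr0 le_rfl hτ.1 hτ.2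
  have p4 : Tendsto (fun τ => MNP U B y₀ z_d T τ r) (𝓝[<] T) atTop :=
    MNP_blowup hU hB hEC y₀ z_d hr hT
  have p6 : ∀ τ ∈ Ico (0 : ℝ) T, tauTP U B y₀ z_d T (MNP U B y₀ z_d T τ r) r = τ :=
    fun τ hτ => tauTP_eq hU hB hEC y₀ z_d hr hτ rfl
  have p5 : ∀ M : ℝ, MNP U B y₀ z_d T 0 r ≤ M →
      MNP U B y₀ z_d T (tauTP U B y₀ z_d T M r) r = M := by
    intro M hM
    rcases eq_or_lt_of_le hM with h0 | h0
    · rw [tauTP_eq hU hB hEC y₀ z_d hr ⟨le_rfl, hT⟩ h0]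
      exact h0
    · have hev1 := p4.eventually (eventually_ge_atTop M)
      have hev2 : ∀ᶠ τ in 𝓝[<] T, τ ∈ Ioo (T / 2) T :=
        Ioo_mem_nhdsLT_of_mem ⟨half_lt_self hT, le_rfl⟩
      obtain ⟨τ', h1, h2⟩ := (hev1.and hev2).exists
      have hτ'0 : (0 : ℝ) ≤ τ' := by linarith [h2.1, half_pos hT]
      have hsub : Icc (0 : ℝ) τ' ⊆ Ico (0 : ℝ) T :=
        fun x hx => ⟨hx.1, lt_of_le_of_lt hx.2 h2.2⟩
      have hmem : M ∈ Icc (MNP U B y₀ z_d T 0 r) (MNP U B y₀ z_d T τ' r) :=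
        ⟨hM, h1⟩
      obtain ⟨τs, hτsIcc, hfs⟩ := intermediate_value_Icc hτ'0 (p2.mono hsub) hmem
      rw [tauTP_eq hU hB hEC y₀ z_d hr ⟨hτsIcc.1, lt_of_le_of_lt hτsIcc.2 h2.2⟩ hfs]
      exact hfs
  exact ⟨p1, p2, p3, p4, p5, p6, fun τ hτ => p6 τ hτ, fun M hM => p5 M hM⟩
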